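/- Let α ∈ ℝ, let I ⊆ ℝ be an open interval, and let q : I → ℝ be a smooth nonvanishing solution of PIV(α) on I. Define σ(x) := (q(x) − 𝓗(x))/2 and ν := α + 1/2. Then σ satisfies the σ-form of the fourth Painlevé equation on I: (σ''(x))² + 4(σ'(x))²·(σ'(x) + 2ν) − 4(x·σ'(x) − σ(x))² = 0 for all x ∈ I. -/

import Mathlib

open Real Filter Set Asymptotics MeasureTheory

noncomputable section

/-- The fourth Painlevé equation PIV(α) at a point `x`:
`q'' = (q')²/(2q) + (3/2)q³ + 4xq² + 2(x²-2α)q`. -/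
def PIVEq (α : ℝ) (q : ℝ → ℝ) (x : ℝ) : Prop :=
  deriv (deriv q) x =
    (deriv q x) ^ 2 / (2 * q x) + (3 / 2) * (q x) ^ 3 + 4 * x * (q x) ^ 2 +
      2 * (x ^ 2 - 2 * α) * q x

/-- The Hamiltonian associated with a solution `q` of PIV(α):
`𝓗(x) = q³/4 + xq² + (x²-2α)q - (q')²/(4q)`. -/
def Ham (α : ℝ) (q : ℝ → ℝ) (x : ℝ) : ℝ :=
  (q x) ^ 3 / 4 + x * (q x) ^ 2 + (x ^ 2 - 2 * α) * q x - (deriv q x) ^ 2 / (4 * q x)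

/-- The σ-function `σ = (q - 𝓗)/2` associated with a solution `q` of PIV(α). -/
def sigmaFn (α : ℝ) (q : ℝ → ℝ) : ℝ → ℝ := fun x => (q x - Ham α q x) / 2

theorem piv_sigma_form (α : ℝ) (I : Set ℝ) (hI : IsOpen I) (hI' : I.OrdConnected)
    (q : ℝ → ℝ) (hsm : ContDiffOn ℝ (⊤ : ℕ∞) q I) (hq0 : ∀ x ∈ I, q x ≠ 0)
    (hpiv : ∀ x ∈ I, PIVEq α q x) :
    ∀ x ∈ I,
      (deriv (deriv (sigmaFn α q)) x) ^ 2 +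
        4 * (deriv (sigmaFn α q) x) ^ 2 * (deriv (sigmaFn α q) x + 2 * (α + 1 / 2)) -
        4 * (x * deriv (sigmaFn α q) x - sigmaFn α q x) ^ 2 = 0 := by
  have hsm' : ContDiffOn ℝ (⊤ : ℕ∞) (deriv q) I := hsm.deriv_of_isOpen hI (by exact_mod_cast le_top)
  have hq : ∀ x ∈ I, HasDerivAt q (deriv q x) x := fun x hx =>
    ((hsm.contDiffAt (hI.mem_nhds hx)).differentiableAt (by simp)).hasDerivAt
  have hp : ∀ x ∈ I, HasDerivAt (deriv q) (deriv (deriv q) x) x := fun x hx =>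
    ((hsm'.contDiffAt (hI.mem_nhds hx)).differentiableAt (by simp)).hasDerivAt
  -- first derivative of sigma
  have key : ∀ x ∈ I, HasDerivAt (sigmaFn α q)
      ((deriv q x - (q x) ^ 2 - 2 * x * q x) / 2) x := by
    intro x hx
    have hQ := hq0 x hx
    have h4Q : (4 : ℝ) * q x ≠ 0 := by
      simpa using hQ
    have h1 : HasDerivAt (fun t => (q t) ^ 3 / 4)
        ((3 : ℕ) * q x ^ 2 * deriv q x / 4) x := by
      simpa using ((hq x hx).pow 3).div_const 4
    have h2 : HasDerivAt (fun t => t * (q t) ^ 2)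
        (1 * (q x) ^ 2 + x * ((2 : ℕ) * q x ^ 1 * deriv q x)) x :=
      (hasDerivAt_id x).mul ((hq x hx).pow 2)
    have h3 : HasDerivAt (fun t => (t ^ 2 - 2 * α) * q t)
        ((2 : ℕ) * x ^ 1 * q x + (x ^ 2 - 2 * α) * deriv q x) x :=
      ((hasDerivAt_pow 2 x).sub_const (2 * α)).mul (hq x hx)
    have h4 : HasDerivAt (fun t => (deriv q t) ^ 2 / (4 * q t))
        (((2 : ℕ) * deriv q x ^ 1 * deriv (deriv q) x * (4 * q x) -
          (deriv q x) ^ 2 * (4 * deriv q x)) / (4 * q x) ^ 2) x :=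
      ((hp x hx).pow 2).div ((hq x hx).const_mul 4) h4Q
    have hH : HasDerivAt (fun t => q t - Ham α q t)
        (deriv q x - ((3 : ℕ) * q x ^ 2 * deriv q x / 4 +
          (1 * (q x) ^ 2 + x * ((2 : ℕ) * q x ^ 1 * deriv q x)) +
          ((2 : ℕ) * x ^ 1 * q x + (x ^ 2 - 2 * α) * deriv q x) -
          ((2 : ℕ) * deriv q x ^ 1 * deriv (deriv q) x * (4 * q x) -
            (deriv q x) ^ 2 * (4 * deriv q x)) / (4 * q x) ^ 2)) x := by
      exact (hq x hx).sub (((h1.add h2).add h3).sub h4)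
    have := hH.div_const 2
    have heq : (deriv q x - ((3 : ℕ) * q x ^ 2 * deriv q x / 4 +
          (1 * (q x) ^ 2 + x * ((2 : ℕ) * q x ^ 1 * deriv q x)) +
          ((2 : ℕ) * x ^ 1 * q x + (x ^ 2 - 2 * α) * deriv q x) -
          ((2 : ℕ) * deriv q x ^ 1 * deriv (deriv q) x * (4 * q x) -
            (deriv q x) ^ 2 * (4 * deriv q x)) / (4 * q x) ^ 2)) / 2
        = (deriv q x - (q x) ^ 2 - 2 * x * q x) / 2 := by
      rw [hpiv x hx]
      push_cast
      field_simp
      ring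
    rw [heq] at this
    exact this
  -- deriv sigma agrees with explicit formula on I
  have hds : ∀ x ∈ I, deriv (sigmaFn α q) x
      = (deriv q x - (q x) ^ 2 - 2 * x * q x) / 2 := fun x hx => (key x hx).deriv
  intro x hx
  have hQ := hq0 x hx
  -- second derivative
  have h2nd : deriv (deriv (sigmaFn α q)) x
      = (deriv (deriv q) x - 2 * q x * deriv q x - 2 * q x - 2 * x * deriv q x) / 2 := by
    have hev : deriv (sigmaFn α q) =ᶠ[nhds x]
        (fun t => (deriv q t - (q t) ^ 2 - 2 * t * q t) / 2) := by
      filter_upwards [hI.mem_nhds hx] with t ht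
      exact hds t ht
    rw [hev.deriv_eq]
    have hD : HasDerivAt (fun t => (deriv q t - (q t) ^ 2 - 2 * t * q t) / 2)
        ((deriv (deriv q) x - (2 : ℕ) * q x ^ 1 * deriv q x -
          (2 * 1 * q x + 2 * x * deriv q x)) / 2) x := by
      have ha : HasDerivAt (fun t => 2 * t * q t) (2 * 1 * q x + 2 * x * deriv q x) x := by
        exact (((hasDerivAt_id' x).const_mul 2).mul (hq x hx))
      exact (((hp x hx).sub ((hq x hx).pow 2)).sub ha).div_const 2
    rw [hD.deriv]
    push_cast
    ring
  rw [h2nd, hds x hx, hpiv x hx]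
  simp only [sigmaFn, Ham]
  field_simp
  ring
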